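/- Averaging formula for the misorientation angle: suppose at every point of a parametrized surface S the Frank's formula holds: θ·(r_u × a) = Σⱼ b⁽ʲ⁾·η_{ju} and θ·(r_v × a) = Σⱼ b⁽ʲ⁾·η_{jv}, with (r_u + r_v) × a ≠ 0. Then at each point θ·‖(r_u + r_v) × a‖² = Σⱼ (η_{ju} + η_{jv})·((r_u + r_v) × a)·b⁽ʲ⁾, and hence θ = (1/S_A)·∫_S Σⱼ (η_{ju} + η_{jv})·((r_u + r_v) × a)·b⁽ʲ⁾ / ‖(r_u + r_v) × a‖² dS, where S_A is the surface area of S (provided θ is constant over S). -/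

import Mathlib

open MeasureTheory

/-- Averaging formula for the misorientation angle: if Frank's formula
`θ·(r_u × a) = Σⱼ η_{ju}·b⁽ʲ⁾`, `θ·(r_v × a) = Σⱼ η_{jv}·b⁽ʲ⁾` holds at every
point of the (orthogonal unit) parameter domain `D` of the grain boundary `S`,
with `(r_u + r_v) × a ≠ 0`, then pointwise
`θ·‖(r_u+r_v) × a‖² = Σⱼ (η_{ju}+η_{jv})·((r_u+r_v) × a)·b⁽ʲ⁾`, and hence
`θ = (1/S_A)·∫_S Σⱼ (η_{ju}+η_{jv})·((r_u+r_v) × a)·b⁽ʲ⁾ / ‖(r_u+r_v) × a‖² dS`,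
where `S_A` is the surface area of `S`. -/
theorem stmt_18 (θ : ℝ) (a : Fin 3 → ℝ) (D : Set (ℝ × ℝ))
    (hD : MeasurableSet D) (hDfin : volume D < ⊤)
    (S_A : ℝ) (hSA : S_A = (volume D).toReal) (hSApos : 0 < S_A)
    (ru rv : ℝ × ℝ → Fin 3 → ℝ) (J : ℕ)
    (b : Fin J → Fin 3 → ℝ) (ηu ηv : Fin J → ℝ × ℝ → ℝ)
    (hFu : ∀ p ∈ D, θ • crossProduct (ru p) a = ∑ j, ηu j p • b j)
    (hFv : ∀ p ∈ D, θ • crossProduct (rv p) a = ∑ j, ηv j p • b j)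
    (hnz : ∀ p ∈ D, crossProduct (ru p + rv p) a ≠ 0) :
    (∀ p ∈ D,
      θ * ∑ i, (crossProduct (ru p + rv p) a i) ^ 2 =
        ∑ j, (ηu j p + ηv j p) * ∑ i, crossProduct (ru p + rv p) a i * b j i) ∧
    θ = (1 / S_A) *
      ∫ p in D,
        (∑ j, (ηu j p + ηv j p) * ∑ i, crossProduct (ru p + rv p) a i * b j i) /
          (∑ i, (crossProduct (ru p + rv p) a i) ^ 2) := by
  have key : ∀ p ∈ D,
      θ • crossProduct (ru p + rv p) a = ∑ j, (ηu j p + ηv j p) • b j := by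
    intro p hp
    have h : crossProduct (ru p + rv p) a
        = crossProduct (ru p) a + crossProduct (rv p) a := by
      rw [map_add]; rfl
    rw [h, smul_add, hFu p hp, hFv p hp, ← Finset.sum_add_distrib]
    exact Finset.sum_congr rfl fun j _ => (add_smul _ _ _).symm
  have hpt : ∀ p ∈ D,
      θ * ∑ i, (crossProduct (ru p + rv p) a i) ^ 2 =
        ∑ j, (ηu j p + ηv j p) * ∑ i, crossProduct (ru p + rv p) a i * b j i := by
    intro p hp
    set c := crossProduct (ru p + rv p) a with hc
    have h := key p hp
    have h2 : ∀ i, θ * c i = ∑ j, (ηu j p + ηv j p) * b j i := by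
      intro i
      have := congrFun h i
      simpa only [hc, Pi.smul_apply, smul_eq_mul, Finset.sum_apply] using this
    calc θ * ∑ i, (c i) ^ 2 = ∑ i, c i * (θ * c i) := by
          rw [Finset.mul_sum]; congr 1; ext i; ring
      _ = ∑ i, c i * ∑ j, (ηu j p + ηv j p) * b j i := by
          simp only [h2]
      _ = ∑ i, ∑ j, (ηu j p + ηv j p) * (c i * b j i) := by
          congr 1; ext i; rw [Finset.mul_sum]; congr 1; ext j; ring
      _ = ∑ j, (ηu j p + ηv j p) * ∑ i, c i * b j i := by
          rw [Finset.sum_comm]; congr 1; ext j; rw [Finset.mul_sum]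
  refine ⟨hpt, ?_⟩
  have hconst : ∀ p ∈ D,
      (∑ j, (ηu j p + ηv j p) * ∑ i, crossProduct (ru p + rv p) a i * b j i) /
          (∑ i, (crossProduct (ru p + rv p) a i) ^ 2) = θ := by
    intro p hp
    have hne : (∑ i, (crossProduct (ru p + rv p) a i) ^ 2) ≠ 0 := by
      intro h0
      apply hnz p hp
      funext i
      have := (Finset.sum_eq_zero_iff_of_nonneg (fun i _ => sq_nonneg _)).mp h0 i
        (Finset.mem_univ i)
      have := pow_eq_zero_iff (n := 2) (by norm_num) |>.mp this
      simpa using this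
    rw [← hpt p hp, mul_div_assoc, div_self hne, mul_one]
  have : (∫ p in D,
        (∑ j, (ηu j p + ηv j p) * ∑ i, crossProduct (ru p + rv p) a i * b j i) /
          (∑ i, (crossProduct (ru p + rv p) a i) ^ 2))
      = ∫ _ in D, θ := by
    exact setIntegral_congr_fun hD hconst
  rw [this, setIntegral_const, smul_eq_mul, measureReal_def, ← hSA]
  field_simp
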